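/- Let f ∈ C¹(𝕊¹) and g ∈ C⁰(𝕊¹), and let H denote the periodic Hilbert transform (Hg)(s) = (1/2π) p.v. ∫_{𝕊¹} cot((s-s')/2) g(s') ds'. Then the commutator [H,f]g = H(fg) − f·H(g) satisfies ‖[H,f]g‖_{C^{0,α}} ≤ C ‖f‖_{C¹} ‖g‖_{C⁰} for every α ∈ (0,1), where C depends only on α. -/

import Mathlib

open Real

noncomputable section

open MeasureTheory intervalIntegral

/-- A continuous `2π`-periodic real function has bounded range. -/
lemma aux_bddAbove {u : ℝ → ℝ} (hc : Continuous u) (hp : Function.Periodic u (2 * π)) :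
    BddAbove (Set.range u) := by
  have h2π : (0 : ℝ) < 2 * π := by positivity
  have hsub : Set.range u ⊆ u '' Set.Icc 0 (2 * π) := by
    rintro _ ⟨x, rfl⟩
    refine ⟨x - ⌊x / (2 * π)⌋ * (2 * π), ?_, hp.sub_int_mul_eq _⟩
    have h1 : (⌊x / (2 * π)⌋ : ℝ) ≤ x / (2 * π) := Int.floor_le _
    have h2 : x / (2 * π) < ⌊x / (2 * π)⌋ + 1 := Int.lt_floor_add_one _
    rw [le_div_iff₀ h2π] at h1
    rw [div_lt_iff₀ h2π] at h2
    constructor <;> [linarith; nlinarith]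
  exact ((isCompact_Icc.image_of_continuousOn hc.continuousOn).bddAbove).mono hsub

lemma aux_deriv_periodic {f : ℝ → ℝ} (hp : Function.Periodic f (2 * π)) :
    Function.Periodic (deriv f) (2 * π) := by
  intro x
  have hfun : (fun y => f (y + 2 * π)) = f := funext fun y => hp y
  calc deriv f (x + 2 * π) = deriv (fun y => f (y + 2 * π)) x := (deriv_comp_add_const f _ x).symm
    _ = deriv f x := by rw [hfun]

lemma aux_sin_lip (a b : ℝ) : |Real.sin a - Real.sin b| ≤ |a - b| := by
  rw [Real.sin_sub_sin, abs_mul, abs_mul]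
  have h1 : |Real.sin ((a - b) / 2)| ≤ |(a - b) / 2| := Real.abs_sin_le_abs
  have h2 : |Real.cos ((a + b) / 2)| ≤ 1 := Real.abs_cos_le_one _
  have : |(a - b) / 2| = |a - b| / 2 := by rw [abs_div]; norm_num
  rw [abs_two]  -- |2| = 2? maybe abs_two exists
  nlinarith [abs_nonneg ((a-b)/2), abs_nonneg (Real.cos ((a+b)/2)), abs_nonneg (a - b)]

lemma aux_sin_half_lower {x : ℝ} (hx : |x| ≤ π) : |x| / π ≤ |Real.sin (x / 2)| := by
  have h : |x / 2| ≤ π / 2 := by rw [abs_div]; simp only [abs_two]; linarith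
  have := Real.mul_abs_le_abs_sin (x := x / 2) h
  have hx2 : |x / 2| = |x| / 2 := by rw [abs_div]; norm_num
  rw [hx2] at this
  have hπ := Real.pi_pos
  calc |x| / π = 2 / π * (|x| / 2) := by field_simp
    _ ≤ |Real.sin (x / 2)| := this

lemma aux_abs_cot_le (t : ℝ) : |Real.cot t| ≤ 1 / |Real.sin t| := by
  rcases eq_or_ne (Real.sin t) 0 with h | h
  · simp [Real.cot_eq_cos_div_sin, h]
  · rw [Real.cot_eq_cos_div_sin, abs_div]
    have : (0:ℝ) < |Real.sin t| := abs_pos.mpr h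
    gcongr
    exact Real.abs_cos_le_one t

lemma aux_cot_sub_cot {a b : ℝ} (ha : Real.sin a ≠ 0) (hb : Real.sin b ≠ 0) :
    Real.cot a - Real.cot b = Real.sin (b - a) / (Real.sin a * Real.sin b) := by
  rw [Real.cot_eq_cos_div_sin, Real.cot_eq_cos_div_sin, Real.sin_sub]
  field_simp

lemma aux_cot_periodic : Function.Periodic Real.cot π := by
  intro x
  rw [Real.cot_eq_cos_div_sin, Real.cot_eq_cos_div_sin, Real.sin_add_pi, Real.cos_add_pi,
    neg_div_neg_eq]

lemma aux_cot_measurable : Measurable Real.cot := by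
  have : Real.cot = fun x => Real.cos x / Real.sin x :=
    funext fun x => Real.cot_eq_cos_div_sin x
  rw [this]
  exact Real.continuous_cos.measurable.div Real.continuous_sin.measurable



/-- The `C⁰` norm on `𝕊¹ = ℝ/2πℤ` (for `2π`-periodic functions). -/
noncomputable def C0norm (u : ℝ → ℝ) : ℝ := ⨆ s : ℝ, |u s|

/-- The `C¹` norm. -/
noncomputable def C1norm (u : ℝ → ℝ) : ℝ := ⨆ s : ℝ, (|u s| + |deriv u s|)

/-- The Hölder norm `‖u‖_{C^{0,α}} = ‖u‖_{C⁰} + sup_{0<|s-s'|<1} |u(s)-u(s')|/|s-s'|^α`. -/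
noncomputable def holderNorm (α : ℝ) (u : ℝ → ℝ) : ℝ :=
  C0norm u +
    sSup {r : ℝ | ∃ s s' : ℝ, s ≠ s' ∧ |s - s'| < 1 ∧ r = |u s - u s'| / |s - s'| ^ α}

/-- The commutator `[H,f]g = H(fg) − f·H(g)` of the periodic Hilbert transform
`(Hg)(s) = (1/2π) p.v.∫ cot((s-s')/2) g(s') ds'` with multiplication by `f`; for `f ∈ C¹`
and `g ∈ C⁰` it is given by the absolutely convergent integral
`(1/2π)∫ cot((s-s')/2)(f(s')-f(s))g(s')ds'`. -/
noncomputable def commH (f g : ℝ → ℝ) (s : ℝ) : ℝ :=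
  (1 / (2 * π)) * ∫ s' in (0 : ℝ)..(2 * π), Real.cot ((s - s') / 2) * ((f s' - f s) * g s')

/-- The kernel of the commutator. -/
def Kker (f g : ℝ → ℝ) (s s' : ℝ) : ℝ :=
  Real.cot ((s - s') / 2) * ((f s' - f s) * g s')

section kernel

variable {f g : ℝ → ℝ} {L G : ℝ}
variable (hLip : ∀ a b : ℝ, |f a - f b| ≤ L * |a - b|) (hG : ∀ x : ℝ, |g x| ≤ G)

include hLip hG in
lemma Kker_window_bound {s s' : ℝ} (hw : |s - s'| ≤ π) :
    |Kker f g s s'| ≤ π * L * G := by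
  have hπ := Real.pi_pos
  have hL : 0 ≤ L := by
    have := hLip 1 0; have h1 : (0:ℝ) ≤ |f 1 - f 0| := abs_nonneg _; simp at this; linarith
  have hG0 : 0 ≤ G := le_trans (abs_nonneg _) (hG 0)
  rcases eq_or_ne s s' with rfl | hne
  · simp only [Kker, sub_self, zero_mul, mul_zero, abs_zero]
    positivity
  · have hd : 0 < |s - s'| := abs_pos.mpr (sub_ne_zero.mpr hne)
    have hsin : |s - s'| / π ≤ |Real.sin ((s - s') / 2)| := aux_sin_half_lower hw
    have hcot : |Real.cot ((s - s') / 2)| ≤ π / |s - s'| := by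
      have h1 : |Real.cot ((s - s') / 2)| ≤ 1 / |Real.sin ((s - s') / 2)| := aux_abs_cot_le _
      have h2 : 1 / |Real.sin ((s - s') / 2)| ≤ 1 / (|s - s'| / π) :=
        one_div_le_one_div_of_le (by positivity) hsin
      have h3 : 1 / (|s - s'| / π) = π / |s - s'| := by field_simp
      linarith
    have hfb : |f s' - f s| ≤ L * |s - s'| := by
      have := hLip s' s; rwa [abs_sub_comm s' s] at this
    have hgb := hG s'
    calc |Kker f g s s'|
        = |Real.cot ((s - s') / 2)| * (|f s' - f s| * |g s'|) := by
          rw [Kker, abs_mul, abs_mul]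
      _ ≤ (π / |s - s'|) * ((L * |s - s'|) * G) := by
          apply mul_le_mul hcot _ (by positivity) (by positivity)
          exact mul_le_mul hfb hgb (abs_nonneg _) (by positivity)
      _ = π * L * G := by field_simp

lemma Kker_periodic (hfp : Function.Periodic f (2 * π)) (hgp : Function.Periodic g (2 * π))
    (s : ℝ) : Function.Periodic (Kker f g s) (2 * π) := by
  intro x
  have h1 : (s - (x + 2 * π)) / 2 = (s - x) / 2 - π := by ring
  have h2 : Real.cot ((s - x) / 2 - π) = Real.cot ((s - x) / 2) := by
    have := aux_cot_periodic ((s - x) / 2 - π)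
    rw [sub_add_cancel] at this; exact this.symm
  simp only [Kker, h1, h2, hfp x, hgp x]

include hLip hG in
lemma Kker_global_bound (hfp : Function.Periodic f (2 * π)) (hgp : Function.Periodic g (2 * π))
    (s s' : ℝ) : |Kker f g s s'| ≤ π * L * G := by
  have hπ := Real.pi_pos
  have h2π : (0:ℝ) < 2 * π := by positivity
  set n := ⌊(s' - (s - π)) / (2 * π)⌋ with hn
  have h1 : (n : ℝ) * (2 * π) ≤ s' - (s - π) := by
    rw [← le_div_iff₀ h2π]; exact Int.floor_le _
  have h2 : s' - (s - π) < ((n : ℝ) + 1) * (2 * π) := by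
    rw [← div_lt_iff₀ h2π]; exact Int.lt_floor_add_one _
  have hy : |s - (s' - n * (2 * π))| ≤ π := by
    rw [abs_le]; constructor <;> nlinarith
  have heq := (Kker_periodic hfp hgp s).sub_int_mul_eq (x := s') n
  rw [← heq]
  exact Kker_window_bound hLip hG hy

lemma Kker_measurable (hf : Continuous f) (hg : Continuous g) (s : ℝ) :
    Measurable (Kker f g s) := by
  apply Measurable.mul
  · exact aux_cot_measurable.comp ((measurable_const.sub measurable_id).div_const 2)
  · exact ((hf.sub continuous_const).mul hg).measurable

include hLip hG in
lemma Kker_intervalIntegrable (hfp : Function.Periodic f (2 * π))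
    (hgp : Function.Periodic g (2 * π)) (hf : Continuous f) (hg : Continuous g)
    (s a b : ℝ) : IntervalIntegrable (Kker f g s) volume a b := by
  apply (_root_.intervalIntegrable_const (c := π * L * G) (μ := volume) (a := a) (b := b)).mono_fun'
    ((Kker_measurable hf hg s).aestronglyMeasurable)
  exact Filter.Eventually.of_forall fun x => by
    simpa [Real.norm_eq_abs] using Kker_global_bound hLip hG hfp hgp s x

lemma commH_eq (hfp : Function.Periodic f (2 * π)) (hgp : Function.Periodic g (2 * π))
    (s a : ℝ) :
    commH f g s = (1 / (2 * π)) * ∫ s' in a..(a + 2 * π), Kker f g s s' := by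
  rw [commH]
  congr 1
  have := (Kker_periodic hfp hgp s).intervalIntegral_add_eq 0 a
  simpa [Kker] using this

end kernel

section diff

variable {f g : ℝ → ℝ} {L G : ℝ}
variable (hLip : ∀ a b : ℝ, |f a - f b| ≤ L * |a - b|) (hG : ∀ x : ℝ, |g x| ≤ G)
variable (hL0 : 0 ≤ L) (hG0 : 0 ≤ G)

include hLip hG hL0 hG0 in
lemma Kker_diff_bound {s₁ s₂ s' : ℝ} (hh0 : 0 < |s₁ - s₂|)
    (h1 : 2 * |s₁ - s₂| ≤ |s₁ - s'|) (h2 : |s₁ - s'| ≤ π) :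
    |Kker f g s₁ s' - Kker f g s₂ s'| ≤ 40 * L * G * |s₁ - s₂| / |s₁ - s'| := by
  have hπ := Real.pi_pos
  have hπlt : π < 3.15 := Real.pi_lt_d2
  set h := |s₁ - s₂| with hhdef
  set D := |s₁ - s'| with hDdef
  have hD0 : 0 < D := lt_of_lt_of_le (by linarith) h1
  set a₁ := (s₁ - s') / 2 with ha1
  set a₂ := (s₂ - s') / 2 with ha2
  have hsin1 : D / π ≤ |Real.sin a₁| := aux_sin_half_lower h2
  have hdiffa : |a₂ - a₁| = h / 2 := by
    rw [ha1, ha2, hhdef, abs_sub_comm s₁ s₂,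
      show (s₂ - s') / 2 - (s₁ - s') / 2 = (s₂ - s₁) / 2 by ring, abs_div]
    norm_num
  have hsindiff : |Real.sin a₂ - Real.sin a₁| ≤ h / 2 := by
    have := aux_sin_lip a₂ a₁; rw [hdiffa] at this; exact this
  have hhD : h ≤ D / 2 := by linarith
  have hπlt' : π < 63/20 := by norm_num at hπlt; linarith
  have hnum : D / (63/20) - D / 4 - D / 15 ≥ 0 := by linarith
  have hd315 : D / (63/20) ≤ D / π := div_le_div_of_nonneg_left hD0.le hπ hπlt'.le
  have hsin2 : D / 15 ≤ |Real.sin a₂| := by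
    have hb : |Real.sin a₁| - |Real.sin a₂| ≤ h / 2 := by
      have habs := abs_sub_abs_le_abs_sub (Real.sin a₁) (Real.sin a₂)
      have h2' := hsindiff; rw [abs_sub_comm] at h2'
      linarith
    linarith
  have hs1ne : Real.sin a₁ ≠ 0 := by
    intro hz; rw [hz, abs_zero] at hsin1
    have : 0 < D / π := by positivity
    linarith
  have hs2ne : Real.sin a₂ ≠ 0 := by
    intro hz; rw [hz, abs_zero] at hsin2
    have : 0 < D / 15 := by positivity
    linarith
  have hdec : Kker f g s₁ s' - Kker f g s₂ s' =
      (Real.cot a₁ - Real.cot a₂) * ((f s' - f s₁) * g s')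
        + Real.cot a₂ * ((f s₂ - f s₁) * g s') := by
    simp only [Kker, ← ha1, ← ha2]; ring
  have hcotd : |Real.cot a₁ - Real.cot a₂| ≤ (h / 2) / ((D / π) * (D / 15)) := by
    rw [aux_cot_sub_cot hs1ne hs2ne, abs_div, abs_mul]
    apply div_le_div₀ (by positivity) _ (by positivity)
    · exact mul_le_mul hsin1 hsin2 (by positivity) (abs_nonneg _)
    · exact le_trans Real.abs_sin_le_abs (le_of_eq hdiffa)
  have hf1 : |f s' - f s₁| ≤ L * D := by
    have := hLip s' s₁; rwa [abs_sub_comm s' s₁] at this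
  have hf2 : |f s₂ - f s₁| ≤ L * h := by
    have := hLip s₂ s₁; rwa [abs_sub_comm s₂ s₁] at this
  have ht1 : |(Real.cot a₁ - Real.cot a₂) * ((f s' - f s₁) * g s')|
      ≤ ((h / 2) / ((D / π) * (D / 15))) * ((L * D) * G) := by
    rw [abs_mul, abs_mul]
    have hLD : (0:ℝ) ≤ L * D := mul_nonneg hL0 hD0.le
    exact mul_le_mul hcotd
      (mul_le_mul hf1 (hG s') (abs_nonneg _) hLD) (by positivity) (by positivity)
  have hcot2 : |Real.cot a₂| ≤ 1 / (D / 15) :=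
    le_trans (aux_abs_cot_le a₂) (one_div_le_one_div_of_le (by positivity) hsin2)
  have ht2 : |Real.cot a₂ * ((f s₂ - f s₁) * g s')|
      ≤ (1 / (D / 15)) * ((L * h) * G) := by
    rw [abs_mul, abs_mul]
    have hLh : (0:ℝ) ≤ L * h := mul_nonneg hL0 hh0.le
    exact mul_le_mul hcot2
      (mul_le_mul hf2 (hG s') (abs_nonneg _) hLh) (by positivity) (by positivity)
  calc |Kker f g s₁ s' - Kker f g s₂ s'|
      = |(Real.cot a₁ - Real.cot a₂) * ((f s' - f s₁) * g s')
          + Real.cot a₂ * ((f s₂ - f s₁) * g s')| := by rw [hdec]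
    _ ≤ |(Real.cot a₁ - Real.cot a₂) * ((f s' - f s₁) * g s')|
          + |Real.cot a₂ * ((f s₂ - f s₁) * g s')| := abs_add_le _ _
    _ ≤ ((h / 2) / ((D / π) * (D / 15))) * ((L * D) * G)
          + (1 / (D / 15)) * ((L * h) * G) := add_le_add ht1 ht2
    _ = (15 * π / 2 + 15) * L * G * h / D := by field_simp
    _ ≤ 40 * L * G * h / D := by
        gcongr ?x / D
        nlinarith [mul_nonneg (mul_nonneg hL0 hG0) hh0.le]

end diff

section main

variable {f g : ℝ → ℝ} {L G : ℝ}
variable (hLip : ∀ a b : ℝ, |f a - f b| ≤ L * |a - b|) (hG : ∀ x : ℝ, |g x| ≤ G)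
variable (hL0 : 0 ≤ L) (hG0 : 0 ≤ G)
variable (hfp : Function.Periodic f (2 * π)) (hgp : Function.Periodic g (2 * π))
variable (hfc : Continuous f) (hgc : Continuous g)

include hLip hG hL0 hG0 hfp hgp hfc hgc in
lemma commH_C0_bound (s : ℝ) : |commH f g s| ≤ π * L * G := by
  have hπ := Real.pi_pos
  rw [commH_eq hfp hgp s (s - π)]
  have hb : ∀ x ∈ Set.uIoc (s - π) (s - π + 2 * π), ‖Kker f g s x‖ ≤ π * L * G := fun x _ => by
    simpa [Real.norm_eq_abs] using Kker_global_bound hLip hG hfp hgp s x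
  have hint := intervalIntegral.norm_integral_le_of_norm_le_const hb
  have h2 : |(s - π + 2 * π) - (s - π)| = 2 * π := by
    rw [show (s - π + 2 * π) - (s - π) = 2 * π by ring, abs_of_pos (by positivity)]
  rw [h2, Real.norm_eq_abs] at hint
  rw [abs_mul, abs_of_pos (show (0:ℝ) < 1 / (2 * π) by positivity)]
  calc 1 / (2 * π) * |∫ s' in (s - π)..(s - π + 2 * π), Kker f g s s'|
      ≤ 1 / (2 * π) * (π * L * G * (2 * π)) :=
        mul_le_mul_of_nonneg_left hint (show (0:ℝ) ≤ 1 / (2 * π) by positivity)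
    _ = π * L * G := by field_simp

include hLip hG hL0 hG0 hfp hgp hfc hgc in
lemma commH_diff_le {s₁ s₂ : ℝ} (hne : s₁ ≠ s₂) (hlt : |s₁ - s₂| < 1) :
    |commH f g s₁ - commH f g s₂| ≤
      4 * (L * G) * |s₁ - s₂| + (40 / π) * (L * G) * |s₁ - s₂| * Real.log (π / (2 * |s₁ - s₂|)) := by
  have hπ := Real.pi_pos
  have hπ3 : (3:ℝ) < π := Real.pi_gt_three
  set h := |s₁ - s₂| with hhdef
  have hh0 : 0 < h := abs_pos.mpr (sub_ne_zero.mpr hne)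
  have h2hπ : 2 * h ≤ π := by linarith
  set F := fun s' => Kker f g s₁ s' - Kker f g s₂ s' with hF
  have hKint : ∀ s a b, IntervalIntegrable (Kker f g s) volume a b := fun s a b =>
    Kker_intervalIntegrable hLip hG hfp hgp hfc hgc s a b
  have hFint : ∀ a b, IntervalIntegrable F volume a b := fun a b =>
    (hKint s₁ a b).sub (hKint s₂ a b)
  have hudiff : commH f g s₁ - commH f g s₂
      = (1 / (2 * π)) * ∫ s' in (s₁ - π)..(s₁ + π), F s' := by
    rw [commH_eq hfp hgp s₁ (s₁ - π), commH_eq hfp hgp s₂ (s₁ - π),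
      show s₁ - π + 2 * π = s₁ + π by ring, ← mul_sub,
      ← intervalIntegral.integral_sub (hKint s₁ _ _) (hKint s₂ _ _)]
  have hsplit : (∫ s' in (s₁ - π)..(s₁ + π), F s')
      = (∫ s' in (s₁ - π)..(s₁ - 2 * h), F s') + (∫ s' in (s₁ - 2 * h)..(s₁ + 2 * h), F s')
        + (∫ s' in (s₁ + 2 * h)..(s₁ + π), F s') := by
    rw [intervalIntegral.integral_add_adjacent_intervals (hFint (s₁ - π) (s₁ - 2 * h))
      (hFint (s₁ - 2 * h) (s₁ + 2 * h)),
      intervalIntegral.integral_add_adjacent_intervals (hFint (s₁ - π) (s₁ + 2 * h))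
      (hFint (s₁ + 2 * h) (s₁ + π))]
  have hlog0 : 0 ≤ Real.log (π / (2 * h)) :=
    Real.log_nonneg ((one_le_div (by positivity)).mpr h2hπ)
  -- middle piece
  have hmid : |∫ s' in (s₁ - 2 * h)..(s₁ + 2 * h), F s'| ≤ 2 * (π * L * G) * (4 * h) := by
    have hb : ∀ x ∈ Set.uIoc (s₁ - 2 * h) (s₁ + 2 * h), ‖F x‖ ≤ 2 * (π * L * G) := fun x _ => by
      have e1 := Kker_global_bound hLip hG hfp hgp s₁ x
      have e2 := Kker_global_bound hLip hG hfp hgp s₂ x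
      rw [Real.norm_eq_abs, hF]
      calc |Kker f g s₁ x - Kker f g s₂ x| ≤ |Kker f g s₁ x| + |Kker f g s₂ x| := abs_sub _ _
        _ ≤ 2 * (π * L * G) := by linarith
    have hint := intervalIntegral.norm_integral_le_of_norm_le_const hb
    have h2 : |(s₁ + 2 * h) - (s₁ - 2 * h)| = 4 * h := by
      rw [show (s₁ + 2 * h) - (s₁ - 2 * h) = 4 * h by ring, abs_of_pos (by positivity)]
    rw [h2, Real.norm_eq_abs] at hint
    exact hint
  -- left piece
  have hleftlog : (∫ t in (s₁ - π)..(s₁ - 2 * h), (s₁ - t)⁻¹) = Real.log (π / (2 * h)) := by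
    have hcomp := intervalIntegral.integral_comp_sub_left (a := s₁ - π) (b := s₁ - 2 * h)
      (fun x : ℝ => x⁻¹) s₁
    rw [show s₁ - (s₁ - 2 * h) = 2 * h by ring, show s₁ - (s₁ - π) = π by ring] at hcomp
    rw [hcomp, integral_inv (Set.notMem_uIcc_of_lt (by positivity) hπ)]
  have hrightlog : (∫ t in (s₁ + 2 * h)..(s₁ + π), (t - s₁)⁻¹) = Real.log (π / (2 * h)) := by
    have hcomp := intervalIntegral.integral_comp_sub_right (a := s₁ + 2 * h) (b := s₁ + π)
      (fun x : ℝ => x⁻¹) s₁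
    rw [show s₁ + 2 * h - s₁ = 2 * h by ring, show s₁ + π - s₁ = π by ring] at hcomp
    rw [hcomp, integral_inv (Set.notMem_uIcc_of_lt (by positivity) hπ)]
  have hLG40 : (0:ℝ) ≤ 40 * L * G * h := by positivity
  have hleft : |∫ s' in (s₁ - π)..(s₁ - 2 * h), F s'|
      ≤ 40 * L * G * h * Real.log (π / (2 * h)) := by
    have hb : ∀ᵐ t ∂volume.restrict (Set.uIoc (s₁ - π) (s₁ - 2 * h)),
        ‖F t‖ ≤ 40 * L * G * h * (s₁ - t)⁻¹ := by
      refine (MeasureTheory.ae_restrict_iff' measurableSet_uIoc).2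
        (Filter.Eventually.of_forall fun t ht => ?_)
      rw [Set.uIoc_of_le (by linarith)] at ht
      have hst : 0 < s₁ - t := by have := ht.2; linarith
      have habs : |s₁ - t| = s₁ - t := abs_of_pos hst
      have hc1 : 2 * |s₁ - s₂| ≤ |s₁ - t| := by rw [habs, ← hhdef]; have := ht.2; linarith
      have hc2 : |s₁ - t| ≤ π := by rw [habs]; have := ht.1; linarith
      have hd := Kker_diff_bound hLip hG hL0 hG0 (s' := t) (by rw [← hhdef]; exact hh0) hc1 hc2
      rw [Real.norm_eq_abs, hF]
      calc |Kker f g s₁ t - Kker f g s₂ t| ≤ 40 * L * G * |s₁ - s₂| / |s₁ - t| := hd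
        _ = 40 * L * G * h * (s₁ - t)⁻¹ := by rw [habs, ← hhdef, div_eq_mul_inv]
    have hbint : IntervalIntegrable (fun t => 40 * L * G * h * (s₁ - t)⁻¹) volume
        (s₁ - π) (s₁ - 2 * h) := by
      apply ContinuousOn.intervalIntegrable
      apply ContinuousOn.mul continuousOn_const
      apply ContinuousOn.inv₀ ((continuous_const.sub continuous_id).continuousOn)
      intro t ht
      rw [Set.uIcc_of_le (by linarith)] at ht
      have := ht.2; intro hz; simp only [Pi.sub_apply, id] at hz; nlinarith
    have hint := intervalIntegral.norm_integral_le_abs_of_norm_le hb hbint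
    rw [Real.norm_eq_abs] at hint
    calc |∫ s' in (s₁ - π)..(s₁ - 2 * h), F s'|
        ≤ |∫ t in (s₁ - π)..(s₁ - 2 * h), 40 * L * G * h * (s₁ - t)⁻¹| := hint
      _ = |40 * L * G * h * Real.log (π / (2 * h))| := by
          rw [intervalIntegral.integral_const_mul, hleftlog]
      _ = 40 * L * G * h * Real.log (π / (2 * h)) :=
          abs_of_nonneg (mul_nonneg hLG40 hlog0)
  have hright : |∫ s' in (s₁ + 2 * h)..(s₁ + π), F s'|
      ≤ 40 * L * G * h * Real.log (π / (2 * h)) := by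
    have hb : ∀ᵐ t ∂volume.restrict (Set.uIoc (s₁ + 2 * h) (s₁ + π)),
        ‖F t‖ ≤ 40 * L * G * h * (t - s₁)⁻¹ := by
      refine (MeasureTheory.ae_restrict_iff' measurableSet_uIoc).2
        (Filter.Eventually.of_forall fun t ht => ?_)
      rw [Set.uIoc_of_le (by linarith)] at ht
      have hst : 0 < t - s₁ := by have := ht.1; linarith
      have habs : |s₁ - t| = t - s₁ := by rw [abs_sub_comm]; exact abs_of_pos hst
      have hc1 : 2 * |s₁ - s₂| ≤ |s₁ - t| := by rw [habs, ← hhdef]; have := ht.1; linarith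
      have hc2 : |s₁ - t| ≤ π := by rw [habs]; have := ht.2; linarith
      have hd := Kker_diff_bound hLip hG hL0 hG0 (s' := t) (by rw [← hhdef]; exact hh0) hc1 hc2
      rw [Real.norm_eq_abs, hF]
      calc |Kker f g s₁ t - Kker f g s₂ t| ≤ 40 * L * G * |s₁ - s₂| / |s₁ - t| := hd
        _ = 40 * L * G * h * (t - s₁)⁻¹ := by rw [habs, ← hhdef, div_eq_mul_inv]
    have hbint : IntervalIntegrable (fun t => 40 * L * G * h * (t - s₁)⁻¹) volume
        (s₁ + 2 * h) (s₁ + π) := by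
      apply ContinuousOn.intervalIntegrable
      apply ContinuousOn.mul continuousOn_const
      apply ContinuousOn.inv₀ ((continuous_id.sub continuous_const).continuousOn)
      intro t ht
      rw [Set.uIcc_of_le (by linarith)] at ht
      have := ht.1; intro hz; simp only [Pi.sub_apply, id] at hz; nlinarith
    have hint := intervalIntegral.norm_integral_le_abs_of_norm_le hb hbint
    rw [Real.norm_eq_abs] at hint
    calc |∫ s' in (s₁ + 2 * h)..(s₁ + π), F s'|
        ≤ |∫ t in (s₁ + 2 * h)..(s₁ + π), 40 * L * G * h * (t - s₁)⁻¹| := hint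
      _ = |40 * L * G * h * Real.log (π / (2 * h))| := by
          rw [intervalIntegral.integral_const_mul, hrightlog]
      _ = 40 * L * G * h * Real.log (π / (2 * h)) :=
          abs_of_nonneg (mul_nonneg hLG40 hlog0)
  -- combine
  have htot : |commH f g s₁ - commH f g s₂|
      ≤ (1 / (2 * π)) * (40 * L * G * h * Real.log (π / (2 * h)) + 2 * (π * L * G) * (4 * h)
          + 40 * L * G * h * Real.log (π / (2 * h))) := by
    rw [hudiff, hsplit, abs_mul, abs_of_pos (show (0:ℝ) < 1 / (2 * π) by positivity)]
    apply mul_le_mul_of_nonneg_left _ (by positivity)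
    calc |(∫ s' in (s₁ - π)..(s₁ - 2 * h), F s') + (∫ s' in (s₁ - 2 * h)..(s₁ + 2 * h), F s')
          + (∫ s' in (s₁ + 2 * h)..(s₁ + π), F s')|
        ≤ |(∫ s' in (s₁ - π)..(s₁ - 2 * h), F s') + (∫ s' in (s₁ - 2 * h)..(s₁ + 2 * h), F s')|
          + |∫ s' in (s₁ + 2 * h)..(s₁ + π), F s'| := abs_add_le _ _
      _ ≤ |∫ s' in (s₁ - π)..(s₁ - 2 * h), F s'| + |∫ s' in (s₁ - 2 * h)..(s₁ + 2 * h), F s'|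
          + |∫ s' in (s₁ + 2 * h)..(s₁ + π), F s'| := by
            have := abs_add_le (∫ s' in (s₁ - π)..(s₁ - 2 * h), F s')
              (∫ s' in (s₁ - 2 * h)..(s₁ + 2 * h), F s')
            linarith
      _ ≤ _ := by linarith
  calc |commH f g s₁ - commH f g s₂|
      ≤ (1 / (2 * π)) * (40 * L * G * h * Real.log (π / (2 * h)) + 2 * (π * L * G) * (4 * h)
          + 40 * L * G * h * Real.log (π / (2 * h))) := htot
    _ = 4 * (L * G) * h + (40 / π) * (L * G) * h * Real.log (π / (2 * h)) := by
        field_simp; ring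

end main

lemma holder_scalar {α h : ℝ} (hα0 : 0 < α) (hα1 : α < 1) (hh0 : 0 < h) (hlt : h < 1) :
    4 * h + (40 / π) * h * Real.log (π / (2 * h)) ≤ (17 + 13 / (1 - α)) * h ^ α := by
  have hπ := Real.pi_pos
  have hπ3 : (3:ℝ) < π := Real.pi_gt_three
  have hπ14 : (3.14:ℝ) < π := Real.pi_gt_d2
  have hπ4 : π < 4 := Real.pi_lt_four
  have h1α : (0:ℝ) < 1 - α := by linarith
  have hp : (0:ℝ) < h⁻¹ := inv_pos.mpr hh0
  have hloginv : 0 ≤ Real.log h⁻¹ := by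
    rw [Real.log_inv]
    have := Real.log_nonpos hh0.le hlt.le
    linarith
  have hlogsum : Real.log (π / (2 * h)) = Real.log (π / 2) + Real.log h⁻¹ := by
    rw [show π / (2 * h) = (π / 2) * h⁻¹ by field_simp, Real.log_mul (by positivity) hp.ne']
  have hlogπ2 : Real.log (π / 2) ≤ 1 := by
    have := Real.log_le_sub_one_of_pos (show (0:ℝ) < π / 2 by positivity)
    linarith
  have hlogtot0 : 0 ≤ Real.log (π / (2 * h)) :=
    Real.log_nonneg ((one_le_div (by positivity)).mpr (by linarith))
  have h40 : 40 / π ≤ 13 := by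
    rw [div_le_iff₀ hπ]
    norm_num at hπ14
    linarith
  have hha : h ≤ h ^ α := by
    have := Real.rpow_le_rpow_of_exponent_ge hh0 hlt.le hα1.le
    rwa [Real.rpow_one] at this
  have hpow0 : 0 < h ^ α := Real.rpow_pos_of_pos hh0 α
  -- key: h * log h⁻¹ ≤ h^α / (1 - α)
  have hkey : h * Real.log h⁻¹ ≤ h ^ α / (1 - α) := by
    have hinvpow : 0 < h⁻¹ ^ (1 - α) := Real.rpow_pos_of_pos hp _
    have e1 : Real.log (h⁻¹ ^ (1 - α)) = (1 - α) * Real.log h⁻¹ := Real.log_rpow hp _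
    have e2 : Real.log (h⁻¹ ^ (1 - α)) ≤ h⁻¹ ^ (1 - α) := by
      have := Real.log_le_sub_one_of_pos hinvpow
      linarith
    have e3 : h * h⁻¹ ^ (1 - α) = h ^ α := by
      rw [Real.inv_rpow hh0.le, ← Real.rpow_neg hh0.le]
      calc h * h ^ (-(1 - α)) = h ^ (1:ℝ) * h ^ (-(1 - α)) := by rw [Real.rpow_one]
        _ = h ^ (1 + -(1 - α)) := (Real.rpow_add hh0 _ _).symm
        _ = h ^ α := by ring_nf
    have e4 : Real.log h⁻¹ ≤ h⁻¹ ^ (1 - α) / (1 - α) := by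
      rw [le_div_iff₀ h1α]
      nlinarith
    calc h * Real.log h⁻¹ ≤ h * (h⁻¹ ^ (1 - α) / (1 - α)) :=
          mul_le_mul_of_nonneg_left e4 hh0.le
      _ = (h * h⁻¹ ^ (1 - α)) / (1 - α) := by ring
      _ = h ^ α / (1 - α) := by rw [e3]
  have t1 : (40 / π) * h * Real.log (π / (2 * h)) ≤ 13 * h + 13 * (h * Real.log h⁻¹) := by
    calc (40 / π) * h * Real.log (π / (2 * h))
        ≤ 13 * h * Real.log (π / (2 * h)) := by
          apply mul_le_mul_of_nonneg_right _ hlogtot0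
          exact mul_le_mul_of_nonneg_right h40 hh0.le
      _ = 13 * h * (Real.log (π / 2) + Real.log h⁻¹) := by rw [hlogsum]
      _ ≤ 13 * h * (1 + Real.log h⁻¹) := by
          apply mul_le_mul_of_nonneg_left _ (by positivity)
          linarith
      _ = 13 * h + 13 * (h * Real.log h⁻¹) := by ring
  have t2 : 13 * (h * Real.log h⁻¹) ≤ 13 * (h ^ α / (1 - α)) := by linarith
  rw [show (17 + 13 / (1 - α)) * h ^ α = 17 * h ^ α + 13 * (h ^ α / (1 - α)) by ring]
  linarith

/-- the commutator estimate
`‖[H,f]g‖_{C^{0,α}} ≤ C ‖f‖_{C¹} ‖g‖_{C⁰}` with `C = C(α)` only. -/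
theorem stmt6 (α : ℝ) (hα : α ∈ Set.Ioo (0 : ℝ) 1) :
    ∃ C : ℝ, 0 < C ∧
      ∀ f g : ℝ → ℝ, Function.Periodic f (2 * π) → Function.Periodic g (2 * π) →
        ContDiff ℝ 1 f → Continuous g →
        holderNorm α (commH f g) ≤ C * C1norm f * C0norm g := by

  obtain ⟨hα0, hα1⟩ := hα
  have h1α : (0:ℝ) < 1 - α := by linarith
  refine ⟨21 + 13 / (1 - α), by positivity, ?_⟩
  intro f g hfp hgp hf1 hgc
  have hπ := Real.pi_pos
  set L := C1norm f with hLdef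
  set G := C0norm g with hGdef
  have hfc : Continuous f := hf1.continuous
  have hdc : Continuous (deriv f) := hf1.continuous_deriv le_rfl
  have hfd : Differentiable ℝ f := hf1.differentiable one_ne_zero
  have hdp : Function.Periodic (deriv f) (2 * π) := aux_deriv_periodic hfp
  have hbdd1 : BddAbove (Set.range fun s => |f s| + |deriv f s|) :=
    aux_bddAbove (hfc.abs.add hdc.abs) (fun x => by simp only [hfp x, hdp x])
  have hC1 : ∀ s, |f s| + |deriv f s| ≤ L := fun s => by
    rw [hLdef, C1norm]; exact le_ciSup hbdd1 s
  have hfd_le : ∀ s, |deriv f s| ≤ L := fun s =>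
    le_trans (le_add_of_nonneg_left (abs_nonneg _)) (hC1 s)
  have hG : ∀ x, |g x| ≤ G := fun x => by
    rw [hGdef, C0norm]
    exact le_ciSup (aux_bddAbove hgc.abs (fun y => by simp only [hgp y])) x
  have hL0 : 0 ≤ L := by
    rw [hLdef, C1norm]; exact Real.iSup_nonneg fun s => by positivity
  have hG0 : 0 ≤ G := by
    rw [hGdef, C0norm]; exact Real.iSup_nonneg fun s => abs_nonneg _
  have hLip : ∀ a b : ℝ, |f a - f b| ≤ L * |a - b| := by
    intro a b
    have := Convex.norm_image_sub_le_of_norm_deriv_le (𝕜 := ℝ) (f := f) (s := Set.univ)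
      (fun x _ => hfd x) (fun x _ => by simpa [Real.norm_eq_abs] using hfd_le x) convex_univ
      (Set.mem_univ b) (Set.mem_univ a)
    simpa [Real.norm_eq_abs] using this
  have hC0u : C0norm (commH f g) ≤ π * L * G := by
    rw [C0norm]
    exact Real.iSup_le
      (fun s => commH_C0_bound hLip hG hL0 hG0 hfp hgp hfc hgc s) (by positivity)
  have hsSup : sSup {r : ℝ | ∃ s s' : ℝ, s ≠ s' ∧ |s - s'| < 1 ∧
      r = |commH f g s - commH f g s'| / |s - s'| ^ α} ≤ (17 + 13 / (1 - α)) * (L * G) := by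
    apply Real.sSup_le _ (by positivity)
    rintro r ⟨s, s', hne, hlt, rfl⟩
    have hh0 : 0 < |s - s'| := abs_pos.mpr (sub_ne_zero.mpr hne)
    have hpow : 0 < |s - s'| ^ α := Real.rpow_pos_of_pos hh0 α
    rw [div_le_iff₀ hpow]
    calc |commH f g s - commH f g s'|
        ≤ 4 * (L * G) * |s - s'| + (40 / π) * (L * G) * |s - s'| * Real.log (π / (2 * |s - s'|)) :=
          commH_diff_le hLip hG hL0 hG0 hfp hgp hfc hgc hne hlt
      _ = (L * G) * (4 * |s - s'| + (40 / π) * |s - s'| * Real.log (π / (2 * |s - s'|))) := by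
          ring
      _ ≤ (L * G) * ((17 + 13 / (1 - α)) * |s - s'| ^ α) :=
          mul_le_mul_of_nonneg_left (holder_scalar hα0 hα1 hh0 hlt) (mul_nonneg hL0 hG0)
      _ = (17 + 13 / (1 - α)) * (L * G) * |s - s'| ^ α := by ring
  have hπ4 : π < 4 := Real.pi_lt_four
  have hfin : π * L * G ≤ 4 * (L * G) := by nlinarith [mul_nonneg hL0 hG0]
  rw [holderNorm]
  calc C0norm (commH f g) + sSup {r : ℝ | ∃ s s' : ℝ, s ≠ s' ∧ |s - s'| < 1 ∧
        r = |commH f g s - commH f g s'| / |s - s'| ^ α}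
      ≤ π * L * G + (17 + 13 / (1 - α)) * (L * G) := add_le_add hC0u hsSup
    _ ≤ 4 * (L * G) + (17 + 13 / (1 - α)) * (L * G) := by linarith
    _ = (21 + 13 / (1 - α)) * L * G := by ring
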